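/- Let μ₁ and μ₂ be Borel probability measures on ℝ, let a₁ < b₁, a₂ < b₂ and c₁, c₂ > 0 be such that μₖ(A) ≥ cₖ·λ(A) for every Borel set A ⊆ [aₖ, bₖ] (k = 1, 2), where λ denotes Lebesgue measure. Then for every ε with 0 < ε < min(b₁ − a₁, b₂ − a₂), the convolution μ₁ ⋆ μ₂ satisfies (μ₁ ⋆ μ₂)(A) ≥ c₁·c₂·ε·λ(A) for every Borel set A ⊆ [a₁ + a₂ + ε, b₁ + b₂ − ε]. -/

import Mathlib

open MeasureTheory

private lemma aux_smul_prod (c d : ENNReal) (μ ν : Measure ℝ) [SFinite μ] [SFinite ν] :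
    ((c • μ).prod (d • ν)) = (c * d) • (μ.prod ν) := by
  ext s hs
  rw [Measure.prod_apply hs, lintegral_smul_measure, Measure.smul_apply, smul_eq_mul,
    Measure.prod_apply hs]
  simp only [Measure.smul_apply, smul_eq_mul]
  rw [lintegral_const_mul _ (measurable_measure_prodMk_left hs), mul_assoc]

/-- The convolution of two Borel measures on `ℝ`: the pushforward of the product
measure under addition. -/
noncomputable def convMeas (μ ν : Measure ℝ) : Measure ℝ :=
  (μ.prod ν).map (fun p : ℝ × ℝ => p.1 + p.2)

/-- If `μₖ ≥ cₖ·λ` on Borel subsets of `[aₖ,bₖ]`, then for `0 < ε < min(b₁-a₁, b₂-a₂)`,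
the convolution `μ₁ ⋆ μ₂ ≥ c₁c₂ε·λ` on Borel subsets of `[a₁+a₂+ε, b₁+b₂-ε]`. -/
theorem stmt_1 (μ₁ μ₂ : Measure ℝ) [IsProbabilityMeasure μ₁] [IsProbabilityMeasure μ₂]
    (a₁ b₁ a₂ b₂ c₁ c₂ : ℝ) (hab₁ : a₁ < b₁) (hab₂ : a₂ < b₂) (hc₁ : 0 < c₁) (hc₂ : 0 < c₂)
    (hμ₁ : ∀ A : Set ℝ, A ⊆ Set.Icc a₁ b₁ → MeasurableSet A →
      ENNReal.ofReal c₁ * volume A ≤ μ₁ A)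
    (hμ₂ : ∀ A : Set ℝ, A ⊆ Set.Icc a₂ b₂ → MeasurableSet A →
      ENNReal.ofReal c₂ * volume A ≤ μ₂ A)
    (ε : ℝ) (hε0 : 0 < ε) (hε : ε < min (b₁ - a₁) (b₂ - a₂)) :
    ∀ A : Set ℝ, A ⊆ Set.Icc (a₁ + a₂ + ε) (b₁ + b₂ - ε) → MeasurableSet A →
      ENNReal.ofReal (c₁ * c₂ * ε) * volume A ≤ convMeas μ₁ μ₂ A := by
  intro A hA hAm
  set ν₁ : Measure ℝ := (ENNReal.ofReal c₁) • volume.restrict (Set.Icc a₁ b₁) with hν₁def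
  set ν₂ : Measure ℝ := (ENNReal.ofReal c₂) • volume.restrict (Set.Icc a₂ b₂) with hν₂def
  have hle₁ : ν₁ ≤ μ₁ := by
    rw [Measure.le_iff]
    intro s hs
    rw [hν₁def, Measure.smul_apply, smul_eq_mul, Measure.restrict_apply hs]
    exact le_trans (hμ₁ _ Set.inter_subset_right (hs.inter measurableSet_Icc))
      (measure_mono Set.inter_subset_left)
  have hle₂ : ν₂ ≤ μ₂ := by
    rw [Measure.le_iff]
    intro s hs
    rw [hν₂def, Measure.smul_apply, smul_eq_mul, Measure.restrict_apply hs]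
    exact le_trans (hμ₂ _ Set.inter_subset_right (hs.inter measurableSet_Icc))
      (measure_mono Set.inter_subset_left)
  have haddm : Measurable fun p : ℝ × ℝ => p.1 + p.2 := measurable_fst.add measurable_snd
  set T : Set (ℝ × ℝ) := (fun p : ℝ × ℝ => p.1 + p.2) ⁻¹' A with hTdef
  have hTm : MeasurableSet T := haddm hAm
  have hconv : convMeas μ₁ μ₂ A = (μ₁.prod μ₂) T := by
    rw [convMeas, Measure.map_apply haddm hAm]
  -- product monotonicity
  have hprodle : (ν₁.prod ν₂) T ≤ (μ₁.prod μ₂) T := by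
    rw [Measure.prod_apply hTm, Measure.prod_apply hTm]
    refine lintegral_mono' hle₁ fun x => ?_
    exact Measure.le_iff.mp hle₂ _ (measurable_prodMk_left hTm)
  -- compute ν₁.prod ν₂ on T
  have hprodν : (ν₁.prod ν₂) T
      = ENNReal.ofReal c₁ * (ENNReal.ofReal c₂ *
        (volume.prod volume) (T ∩ (Set.Icc a₁ b₁ ×ˢ Set.Icc a₂ b₂))) := by
    rw [hν₁def, hν₂def, aux_smul_prod, Measure.prod_restrict, Measure.smul_apply,
      Measure.restrict_apply hTm, smul_eq_mul, mul_assoc]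
  set S : Set (ℝ × ℝ) := T ∩ (Set.Icc a₁ b₁ ×ˢ Set.Icc a₂ b₂) with hSdef
  have hSm : MeasurableSet S := hTm.inter (measurableSet_Icc.prod measurableSet_Icc)
  -- the slanted set
  set S₂ : Set (ℝ × ℝ) := {p : ℝ × ℝ | p.1 ∈ Set.Icc a₁ b₁ ∧ p.2 ∈ A ∧
      p.1 ∈ Set.Icc (p.2 - b₂) (p.2 - a₂)} with hS₂def
  have hS₂m : MeasurableSet S₂ := by
    refine (measurable_fst measurableSet_Icc).inter ?_
    refine (measurable_snd hAm).inter ?_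
    exact MeasurableSet.inter (measurableSet_le (measurable_snd.sub measurable_const)
      measurable_fst) (measurableSet_le measurable_fst (measurable_snd.sub measurable_const))
  have hSS₂ : (volume.prod volume) S = (volume.prod volume) S₂ := by
    rw [Measure.prod_apply hSm, Measure.prod_apply hS₂m]
    refine lintegral_congr fun x => ?_
    by_cases hx : x ∈ Set.Icc a₁ b₁
    · have h1 : Prod.mk x ⁻¹' S
          = (fun y => x + y) ⁻¹' {s | s ∈ A ∧ s ∈ Set.Icc (x + a₂) (x + b₂)} := by
        ext y
        simp only [hSdef, hTdef, Set.mem_preimage, Set.mem_inter_iff, Set.mem_prod,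
          Set.mem_Icc, Set.mem_setOf_eq]
        constructor
        · rintro ⟨hy1, _, hy2⟩; exact ⟨hy1, by linarith [hy2.1], by linarith [hy2.2]⟩
        · rintro ⟨hy1, hy2, hy3⟩; exact ⟨hy1, hx, by constructor <;> linarith⟩
      have h2 : Prod.mk x ⁻¹' S₂ = {s | s ∈ A ∧ s ∈ Set.Icc (x + a₂) (x + b₂)} := by
        ext s
        simp only [hS₂def, Set.mem_preimage, Set.mem_setOf_eq, Set.mem_Icc]
        constructor
        · rintro ⟨_, hs1, hs2, hs3⟩; exact ⟨hs1, by linarith, by linarith⟩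
        · rintro ⟨hs1, hs2, hs3⟩; exact ⟨hx, hs1, by linarith, by linarith⟩
      rw [h1, h2, measure_preimage_add]
    · have h1 : Prod.mk x ⁻¹' S = ∅ := by
        ext y; simp only [hSdef, Set.mem_preimage, Set.mem_inter_iff, Set.mem_prod,
          Set.mem_empty_iff_false, iff_false]
        rintro ⟨_, hy, _⟩; exact hx hy
      have h2 : Prod.mk x ⁻¹' S₂ = ∅ := by
        ext y; simp only [hS₂def, Set.mem_preimage, Set.mem_setOf_eq,
          Set.mem_empty_iff_false, iff_false]
        rintro ⟨hy, _⟩; exact hx hy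
      rw [h1, h2]
  -- lower bound for S₂ via symmetric Fubini
  have hS₂lb : ENNReal.ofReal ε * volume A ≤ (volume.prod volume) S₂ := by
    rw [Measure.prod_apply_symm hS₂m]
    have key : ∀ s : ℝ, A.indicator (fun _ => ENNReal.ofReal ε) s
        ≤ volume ((fun x => (x, s)) ⁻¹' S₂) := by
      intro s
      by_cases hs : s ∈ A
      · have hslice : (fun x => (x, s)) ⁻¹' S₂
            = Set.Icc a₁ b₁ ∩ Set.Icc (s - b₂) (s - a₂) := by
          ext x
          simp only [hS₂def, Set.mem_preimage, Set.mem_setOf_eq, Set.mem_inter_iff]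
          tauto
        rw [Set.indicator_of_mem hs, hslice, Set.Icc_inter_Icc, Real.volume_Icc]
        refine ENNReal.ofReal_le_ofReal ?_
        obtain ⟨hs1, hs2⟩ := hA hs
        have hε1 : ε < b₁ - a₁ := lt_of_lt_of_le hε (min_le_left _ _)
        have hε2 : ε < b₂ - a₂ := lt_of_lt_of_le hε (min_le_right _ _)
        have h1 : a₁ ⊔ (s - b₂) + ε ≤ b₁ ⊓ (s - a₂) := by
          refine le_min ?_ ?_
          · have : a₁ ⊔ (s - b₂) ≤ b₁ - ε := max_le (by linarith) (by linarith)
            linarith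
          · have : a₁ ⊔ (s - b₂) ≤ s - a₂ - ε := max_le (by linarith) (by linarith)
            linarith
        linarith [h1]
      · rw [Set.indicator_of_notMem hs]; exact zero_le
    calc ENNReal.ofReal ε * volume A
        = ∫⁻ s, A.indicator (fun _ => ENNReal.ofReal ε) s := by
          rw [lintegral_indicator hAm, setLIntegral_const, mul_comm]
      _ ≤ ∫⁻ s, volume ((fun x => (x, s)) ⁻¹' S₂) := lintegral_mono key
  -- put everything together
  rw [hconv]
  calc ENNReal.ofReal (c₁ * c₂ * ε) * volume A
      = ENNReal.ofReal c₁ * (ENNReal.ofReal c₂ * (ENNReal.ofReal ε * volume A)) := by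
        rw [ENNReal.ofReal_mul (by positivity), ENNReal.ofReal_mul hc₁.le, mul_assoc, mul_assoc]
    _ ≤ ENNReal.ofReal c₁ * (ENNReal.ofReal c₂ * (volume.prod volume) S₂) := by
        gcongr
    _ = (ν₁.prod ν₂) T := by rw [hprodν, hSS₂]
    _ ≤ (μ₁.prod μ₂) T := hprodle
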